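/- Let λ > 0 and let q : ℝ → Quaternion ℝ be differentiable with ‖q(t)‖ = 1 for all t and satisfy q'(t) = (1/2) · q(t) * ⟦−λ · sgn₊(q°(t)) · q⃗(t)⟧. If q°(t₀) = 0 at some time t₀, then the derivative of the real part at t₀ equals (λ/2) · ‖q⃗(t₀)‖² = λ/2 > 0. In particular, the set {q° = 0, ‖q⃗‖ = 1} is not invariant: the real part immediately becomes positive. -/

import Mathlib

noncomputable section

/-- `sgn₊ x = 1` if `x ≥ 0` and `-1` if `x < 0`. -/
def sgnPlus (x : ℝ) : ℝ := if 0 ≤ x then 1 else -1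

/-- The vector (imaginary) part of a quaternion, as a vector in Euclidean `ℝ³`. -/
def vecPart (p : Quaternion ℝ) : EuclideanSpace ℝ (Fin 3) := WithLp.toLp 2 ![p.imI, p.imJ, p.imK]

/-- The pure-imaginary quaternion `⟦v⟧` with vector part `v`. -/
def quatOfVec (v : EuclideanSpace ℝ (Fin 3)) : Quaternion ℝ := ⟨0, v 0, v 1, v 2⟩

theorem real_part_strictly_increases_at_zero
    (lam : ℝ) (hlam : 0 < lam) (q : ℝ → Quaternion ℝ)
    (hq : Differentiable ℝ q)
    (hunit : ∀ t : ℝ, ‖q t‖ = 1)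
    (hdyn : ∀ t : ℝ, deriv q t =
      (1 / 2 : ℝ) • (q t * quatOfVec ((-(lam * sgnPlus (q t).re)) • vecPart (q t))))
    (t₀ : ℝ) (hre : (q t₀).re = 0) :
    HasDerivAt (fun t => (q t).re) (lam / 2 * ‖vecPart (q t₀)‖ ^ 2) t₀ ∧
      lam / 2 * ‖vecPart (q t₀)‖ ^ 2 = lam / 2 ∧ 0 < lam / 2 := by
  have hnormsq : (q t₀).imI ^ 2 + (q t₀).imJ ^ 2 + (q t₀).imK ^ 2 = 1 := by
    have h := Quaternion.normSq_eq_norm_mul_self (q t₀)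
    rw [hunit, Quaternion.normSq_def', hre] at h
    linarith
  have hvec : ‖vecPart (q t₀)‖ ^ 2 = 1 := by
    rw [← real_inner_self_eq_norm_sq]
    rw [PiLp.inner_apply]
    simp [vecPart, Fin.sum_univ_three, ← sq]
    linarith [hnormsq]
  have hd : HasDerivAt q (deriv q t₀) t₀ := (hq t₀).hasDerivAt
  have hre' : HasDerivAt (fun t => (q t).re) ((deriv q t₀).re) t₀ := by
    have h := hd.inner ℝ (hasDerivAt_const t₀ (1 : Quaternion ℝ))
    simp only [Quaternion.inner_def, star_one, mul_one, inner_zero_right, add_zero,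
      zero_add] at h
    exact h
  have hval : (deriv q t₀).re = lam / 2 * ‖vecPart (q t₀)‖ ^ 2 := by
    rw [hdyn t₀, hvec]
    rw [Quaternion.re_smul, Quaternion.re_mul]
    simp [sgnPlus, quatOfVec, vecPart, hre, ← sq]
    nlinarith [hnormsq]
  exact ⟨hval ▸ hre', by rw [hvec]; ring, by positivity⟩
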